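/- arXiv:1609.03943 — 8 statements merged into one kernel-verified Lean document; each statement's English description precedes it below -/
import Mathlib

section
/- Let M be a finite 2-semilattice. Define M' = {a ∈ M : a is reachable from every element of M}. Then: (i) M' is nonempty; (ii) M' is strongly connected, i.e. every element of M' is reachable from every element of M'; and (iii) for every b ∈ M there exists a ∈ M' with b·a = a (a single directed edge from b into M'). -/
/-- Reachability within a subset `S` via the 2-semilattice digraph `a → b ↔ a * b = b`:
a directed walk from `a` to `b` all of whose vertices lie in `S`. -/
def ReachIn {M : Type*} [Mul M] (S : Set M) (a b : M) : Prop :=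
  Relation.ReflTransGen (fun x y => x ∈ S ∧ y ∈ S ∧ x * y = y) a b

theorem stmt0 {M : Type*} [Mul M] [Finite M] [Nonempty M]
    (hidem : ∀ x : M, x * x = x)
    (hcomm : ∀ x y : M, x * y = y * x)
    (habs : ∀ x y : M, x * (x * y) = x * y) :
    let M' : Set M := {a | ∀ b : M, Relation.ReflTransGen (fun x y => x * y = y) b a}
    M'.Nonempty ∧
      (∀ a ∈ M', ∀ b ∈ M', ReachIn M' a b) ∧
      (∀ b : M, ∃ a ∈ M', b * a = a) := by
  intro M'
  set e : M → M → Prop := fun x y => x * y = y with he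
  -- edges into products
  have edge1 : ∀ a b : M, e a (a * b) := fun a b => habs a b
  have edge2 : ∀ a b : M, e b (a * b) := by
    intro a b
    show b * (a * b) = a * b
    rw [hcomm a b, habs b a, hcomm b a]
  -- directedness gives an element reachable from every member of a list
  have key : ∀ l : List M, ∃ c : M, ∀ x ∈ l, Relation.ReflTransGen e x c := by
    intro l
    induction l with
    | nil => obtain ⟨c⟩ := ‹Nonempty M›; exact ⟨c, by simp⟩
    | cons a l ih =>
        obtain ⟨c, hc⟩ := ih
        refine ⟨a * c, ?_⟩
        intro x hx
        rcases List.mem_cons.mp hx with rfl | h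
        · exact Relation.ReflTransGen.single (edge1 x c)
        · exact (hc x h).trans (Relation.ReflTransGen.single (edge2 a c))
  have := Fintype.ofFinite M
  obtain ⟨c, hc⟩ := key (Finset.univ.toList)
  have hcM' : c ∈ M' := fun b => hc b (by simp)
  -- M' is closed under edges
  have closed : ∀ x ∈ M', ∀ y, e x y → y ∈ M' := by
    intro x hx y hxy b
    exact (hx b).trans (Relation.ReflTransGen.single hxy)
  refine ⟨⟨c, hcM'⟩, ?_, ?_⟩
  · -- strong connectivity within M'
    intro a ha b hb
    have hab : Relation.ReflTransGen e a b := hb a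
    clear hb
    induction hab with
    | refl => exact Relation.ReflTransGen.refl
    | @tail p q h hstep ih =>
        have hpM' : p ∈ M' := by
          clear ih hstep
          induction h with
          | refl => exact ha
          | tail _ hstep ih => exact closed _ ih _ hstep
        have hqM' : q ∈ M' := closed _ hpM' _ hstep
        exact (ih).trans (Relation.ReflTransGen.single ⟨hpM', hqM', hstep⟩)
  · intro b
    refine ⟨b * c, ?_, habs b c⟩
    exact closed c hcM' (b * c) (edge2 b c)
end

section
/- Let M be a finite 2-semilattice and let M' = {a ∈ M : a is reachable from every element of M} be its smallest strongly connected component. Then M' is an absorbing subuniverse with respect to ·: for all a ∈ M' and b ∈ M, both a·b ∈ M' and b·a ∈ M'. -/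
theorem stmt1 {M : Type*} [Mul M] [Finite M]
    (hidem : ∀ x : M, x * x = x)
    (hcomm : ∀ x y : M, x * y = y * x)
    (habs : ∀ x y : M, x * (x * y) = x * y) :
    let M' : Set M := {a | ∀ b : M, Relation.ReflTransGen (fun x y => x * y = y) b a}
    ∀ a ∈ M', ∀ b : M, a * b ∈ M' ∧ b * a ∈ M' := by
  intro M' a ha b
  have h : a * b ∈ M' := fun c => (ha c).tail (habs a b)
  exact ⟨h, by rwa [hcomm b a]⟩
end

section
/- Let t be an element of the free magma on two generators x and y in which both generators occur. Then for every 2-semilattice M and all a, b ∈ M, the evaluation of t in M under the assignment x ↦ a, y ↦ b equals a·b. -/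
/-- The generator `a` occurs in the free-magma term `t`. -/
def Occurs {α : Type*} (a : α) : FreeMagma α → Prop
  | .of b => a = b
  | .mul x y => Occurs a x ∨ Occurs a y

theorem stmt3 (t : FreeMagma (Fin 2)) (h0 : Occurs 0 t) (h1 : Occurs 1 t) :
    ∀ (M : Type*) [Mul M],
      (∀ x : M, x * x = x) →
      (∀ x y : M, x * y = y * x) →
      (∀ x y : M, x * (x * y) = x * y) →
      ∀ a b : M, FreeMagma.lift ![a, b] t = a * b := by
  intro M _ hid hcomm habs a b
  have hba : b * a = a * b := hcomm b a
  have haab : a * (a * b) = a * b := habs a b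
  have hbab : b * (a * b) = a * b := by rw [← hba, habs, hba]
  have haba : (a * b) * a = a * b := by rw [hcomm, haab]
  have habb : (a * b) * b = a * b := by rw [hcomm, hbab]
  have habab : (a * b) * (a * b) = a * b := hid _
  have key : ∀ s : FreeMagma (Fin 2),
      (FreeMagma.lift ![a, b] s = a ∧ Occurs 0 s ∧ ¬ Occurs 1 s) ∨
      (FreeMagma.lift ![a, b] s = b ∧ ¬ Occurs 0 s ∧ Occurs 1 s) ∨
      (FreeMagma.lift ![a, b] s = a * b ∧ Occurs 0 s ∧ Occurs 1 s) := by
    intro s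
    induction s using FreeMagma.recOnMul with
    | ih1 c =>
      fin_cases c
      · left; refine ⟨by simp, rfl, by simp [Occurs]⟩
      · right; left; exact ⟨by simp, by simp [Occurs], rfl⟩
    | ih2 x y ihx ihy =>
      have hm : FreeMagma.lift ![a, b] (x * y) =
          FreeMagma.lift ![a, b] x * FreeMagma.lift ![a, b] y := map_mul _ _ _
      have hO : ∀ i : Fin 2, Occurs i (x * y) ↔ Occurs i x ∨ Occurs i y := by
        intro i; rfl
      rcases ihx with ⟨ex, ox0, ox1⟩ | ⟨ex, ox0, ox1⟩ | ⟨ex, ox0, ox1⟩ <;>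
        rcases ihy with ⟨ey, oy0, oy1⟩ | ⟨ey, oy0, oy1⟩ | ⟨ey, oy0, oy1⟩ <;>
        rw [hm, ex, ey]
      · exact Or.inl ⟨hid a, Or.inl ox0, by simp [hO, ox1, oy1]⟩
      · exact Or.inr (Or.inr ⟨rfl, Or.inl ox0, Or.inr oy1⟩)
      · exact Or.inr (Or.inr ⟨haab, Or.inl ox0, Or.inr oy1⟩)
      · exact Or.inr (Or.inr ⟨hba, Or.inr oy0, Or.inl ox1⟩)
      · exact Or.inr (Or.inl ⟨hid b, by simp [hO, ox0, oy0], Or.inl ox1⟩)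
      · exact Or.inr (Or.inr ⟨hbab, Or.inr oy0, Or.inl ox1⟩)
      · exact Or.inr (Or.inr ⟨haba, Or.inl ox0, Or.inl ox1⟩)
      · exact Or.inr (Or.inr ⟨habb, Or.inl ox0, Or.inl ox1⟩)
      · exact Or.inr (Or.inr ⟨habab, Or.inl ox0, Or.inl ox1⟩)
  rcases key t with ⟨e, _, n1⟩ | ⟨e, n0, _⟩ | ⟨e, _, _⟩
  · exact absurd h1 n1
  · exact absurd h0 n0
  · exact e
end

section
/- Let M be a type with a binary operation ·, and let θ and α be congruences on (M,·). Assume θ is projection-on-classes (a·b = a whenever θ a b) and commutative modulo θ (θ (a·b) (b·a) for all a, b). Then the relational product θ∘α∘θ is contained in α∘θ∘α: for all a, d ∈ M, if there exist b, c with θ a b, α b c, and θ c d, then there exist b', c' with α a b', θ b' c', and α c' d. -/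
theorem stmt4 {M : Type*} [Mul M] (θ α : M → M → Prop)
    (hθequiv : Equivalence θ)
    (hθcompat : ∀ a b c d : M, θ a b → θ c d → θ (a * c) (b * d))
    (hαequiv : Equivalence α)
    (hαcompat : ∀ a b c d : M, α a b → α c d → α (a * c) (b * d))
    (hproj : ∀ a b : M, θ a b → a * b = a)
    (hcommθ : ∀ a b : M, θ (a * b) (b * a)) :
    ∀ a d : M, (∃ b c : M, θ a b ∧ α b c ∧ θ c d) →
      ∃ b' c' : M, α a b' ∧ θ b' c' ∧ α c' d := by
  rintro a d ⟨b, c, hab, hbc, hcd⟩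
  refine ⟨a * c, d * b, ?_, ?_, ?_⟩
  · have := hαcompat a a b c (hαequiv.refl a) hbc
    rwa [hproj a b hab] at this
  · exact hθequiv.trans (hθcompat a b c d hab hcd) (hcommθ b d)
  · have := hαcompat d d b c (hαequiv.refl d) hbc
    rw [hproj d c (hθequiv.symm hcd)] at this
    exact this
end

section
/- Let M be a type with a binary operation ·, and let θ and α be congruences on (M,·). Assume θ is projection-on-classes (a·b = a whenever θ a b) and commutative modulo θ (θ (a·b) (b·a) for all a, b). Then the join α ⊔ θ in the lattice of congruences equals the relational product α∘θ∘α: for all a, d ∈ M, (α ⊔ θ) a d holds if and only if there exist b, c with α a b, θ b c, and α c d. -/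
theorem stmt5 {M : Type*} [Mul M] (θ α : M → M → Prop)
    (hθequiv : Equivalence θ)
    (hθcompat : ∀ a b c d : M, θ a b → θ c d → θ (a * c) (b * d))
    (hαequiv : Equivalence α)
    (hαcompat : ∀ a b c d : M, α a b → α c d → α (a * c) (b * d))
    (hproj : ∀ a b : M, θ a b → a * b = a)
    (hcommθ : ∀ a b : M, θ (a * b) (b * a)) :
    -- the join `α ⊔ θ`, i.e. the transitive closure of the union, equals `α ∘ θ ∘ α`
    ∀ a d : M, Relation.TransGen (fun x y => α x y ∨ θ x y) a d ↔
      ∃ b c : M, α a b ∧ θ b c ∧ α c d := by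
  intro a d
  constructor
  · intro h
    induction h with
    | single h =>
      rcases h with h | h
      · exact ⟨_, _, h, hθequiv.refl _, hαequiv.refl _⟩
      · exact ⟨_, _, hαequiv.refl _, h, hαequiv.refl _⟩
    | @tail d' e _ hstep ih =>
      obtain ⟨b, c, hab, hbc, hcd⟩ := ih
      rcases hstep with h | h
      · exact ⟨b, c, hab, hbc, hαequiv.trans hcd h⟩
      · -- h : θ d' e ; use b' = b * d', c' = e * c
        refine ⟨b * d', e * c, ?_, ?_, ?_⟩
        · -- α a (b * d')
          have h1 : α (b * c) (b * d') := hαcompat _ _ _ _ (hαequiv.refl b) hcd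
          rw [hproj _ _ hbc] at h1
          exact hαequiv.trans hab h1
        · -- θ (b * d') (e * c)
          have h1 : θ (b * d') (c * d') := hθcompat _ _ _ _ hbc (hθequiv.refl d')
          have h2 : θ (c * d') (c * e) := hθcompat _ _ _ _ (hθequiv.refl c) h
          have h3 : θ (c * e) (e * c) := hcommθ c e
          exact hθequiv.trans h1 (hθequiv.trans h2 h3)
        · -- α (e * c) e
          have h1 : α (e * c) (e * d') := hαcompat _ _ _ _ (hαequiv.refl e) hcd
          rw [hproj _ _ (hθequiv.symm h)] at h1
          exact h1
  · rintro ⟨b, c, hab, hbc, hcd⟩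
    exact Relation.TransGen.trans (Relation.TransGen.single (Or.inl hab))
      (Relation.TransGen.trans (Relation.TransGen.single (Or.inr hbc))
        (Relation.TransGen.single (Or.inl hcd)))
end

section
/- Let M be a type with a binary operation · and let α be a congruence on (M,·) that is projection-on-classes (a·b = a whenever α a b) and commutative modulo α (α (a·b) (b·a) for all a, b). Then α is uniquely determined: for all a, b ∈ M, α a b holds if and only if a·b = a and b·a = b. -/
theorem stmt6 {M : Type*} [Mul M] (α : M → M → Prop)
    (hαequiv : Equivalence α)
    (hαcompat : ∀ a b c d : M, α a b → α c d → α (a * c) (b * d))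
    (hproj : ∀ a b : M, α a b → a * b = a)
    (hcommα : ∀ a b : M, α (a * b) (b * a)) :
    ∀ a b : M, α a b ↔ a * b = a ∧ b * a = b := by
  intro a b
  constructor
  · intro h
    exact ⟨hproj a b h, hproj b a (hαequiv.symm h)⟩
  · rintro ⟨h1, h2⟩
    have := hcommα a b
    rwa [h1, h2] at this
end

section
/- Let A and B be finite 2-semilattices whose digraphs are strongly connected, with B simple. If R ⊆ A × B is a subdirect subuniverse, then either R = A × B, or there is a surjective map φ : A → B with φ(a·a') = φ(a)·φ(a') for all a, a' ∈ A such that R = {(a, φ(a)) : a ∈ A}. -/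
/-- A magma is simple if its only congruences are the diagonal and the full relation. -/
def MagmaSimple (B : Type*) [Mul B] : Prop :=
  ∀ σ : B → B → Prop, Equivalence σ →
    (∀ a b c d : B, σ a b → σ c d → σ (a * c) (b * d)) →
    (∀ a b : B, σ a b ↔ a = b) ∨ (∀ a b : B, σ a b)

section Stmt10Aux

variable {A B : Type*} [Mul A] [Mul B]

/-- absorbing subsets of a strongly connected magma are everything -/
private lemma stmt10_absorb
    (hscB : ∀ a b : B, Relation.ReflTransGen (fun x y => x * y = y) a b)
    (S : Set B) (hne : S.Nonempty) (hcl : ∀ s ∈ S, ∀ c : B, s * c ∈ S) :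
    ∀ t, t ∈ S := by
  intro t
  obtain ⟨s, hs⟩ := hne
  have h := hscB s t
  induction h with
  | refl => exact hs
  | tail hw he ih =>
      rename_i b c
      have := hcl b ih c
      rwa [he] at this

/-- a full row propagates to the whole product -/
private lemma stmt10_fullrow
    (hcommB : ∀ x y : B, x * y = y * x)
    (hscA : ∀ a b : A, Relation.ReflTransGen (fun x y => x * y = y) a b)
    (hscB : ∀ a b : B, Relation.ReflTransGen (fun x y => x * y = y) a b)
    (R : Set (A × B))
    (hRclosed : ∀ p ∈ R, ∀ q ∈ R, p * q ∈ R)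
    (hRsd1 : ∀ a : A, ∃ b : B, (a, b) ∈ R)
    (a₀ : A) (h₀ : ∀ b, (a₀, b) ∈ R) :
    ∀ a b, (a, b) ∈ R := by
  have key : ∀ a, Relation.ReflTransGen (fun x y : A => x * y = y) a₀ a →
      ∀ b, (a, b) ∈ R := by
    intro a h
    induction h with
    | refl => exact h₀
    | tail hw he ih =>
        rename_i z z'
        intro b
        refine stmt10_absorb hscB {b | (z', b) ∈ R} ?_ ?_ b
        · obtain ⟨b', hb'⟩ := hRsd1 z'
          exact ⟨b', hb'⟩
        · intro s hs c
          have h2 := hRclosed (z, c) (ih c) (z', s) hs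
          have : (z * z', c * s) ∈ R := h2
          rw [he, hcommB c s] at this
          exact this
  intro a b
  exact key a (hscA a₀ a) b

/-- pointwise product of rows, list version -/
private lemma stmt10_pointwise
    (R : Set (A × B))
    (hRclosed : ∀ p ∈ R, ∀ q ∈ R, p * q ∈ R)
    {a a' : A} :
    ∀ {s s' : List B}, List.Forall₂ (fun x y => x * y = y) s s' →
      (∀ e ∈ s, (a, e) ∈ R) → (∀ d ∈ s', (a', d) ∈ R) →
      ∀ d ∈ s', (a * a', d) ∈ R := by
  intro s s' h
  induction h with
  | nil => intro _ _ d hd; simp at hd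
  | @cons x y s₁ s₁' hxy htail ih =>
      intro hs hs' d hd
      rcases List.mem_cons.mp hd with rfl | hd'
      · have := hRclosed (a, x) (hs x (by simp)) (a', d) (hs' d (by simp))
        have h2 : (a * a', x * d) ∈ R := this
        rwa [hxy] at h2
      · exact ih (fun e he => hs e (by simp [he])) (fun e he => hs' e (by simp [he])) d hd'

/-- head walk lifted to lists -/
private lemma stmt10_cons_walk (hidemB : ∀ x : B, x * x = x)
    {v b : B} (h : Relation.ReflTransGen (fun x y : B => x * y = y) v b) (c : List B) :
    Relation.ReflTransGen (List.Forall₂ (fun x y : B => x * y = y)) (v :: c) (b :: c) := by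
  induction h with
  | refl => exact Relation.ReflTransGen.refl
  | tail hw he ih =>
      exact ih.tail (List.Forall₂.cons he (List.forall₂_same.mpr (fun x _ => hidemB x)))

/-- tail walk lifted to lists -/
private lemma stmt10_tail_walk (hidemB : ∀ x : B, x * x = x) {b : B} {l l' : List B}
    (h : Relation.ReflTransGen (List.Forall₂ (fun x y : B => x * y = y)) l l') :
    Relation.ReflTransGen (List.Forall₂ (fun x y : B => x * y = y)) (b :: l) (b :: l') := by
  induction h with
  | refl => exact Relation.ReflTransGen.refl
  | tail hw he ih =>
      exact ih.tail (List.Forall₂.cons (hidemB b) he)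

/-- from a constant list one can walk to any list -/
private lemma stmt10_walk_replicate (hidemB : ∀ x : B, x * x = x)
    (hscB : ∀ a b : B, Relation.ReflTransGen (fun x y => x * y = y) a b)
    (t : List B) (v : B) :
    Relation.ReflTransGen (List.Forall₂ (fun x y : B => x * y = y))
      (List.replicate t.length v) t := by
  induction t with
  | nil =>
      simp only [List.length_nil, List.replicate]
      exact Relation.ReflTransGen.refl
  | cons b t ih =>
      have h1 := stmt10_cons_walk hidemB (hscB v b) (List.replicate t.length v)
      have h2 := stmt10_tail_walk (b := b) hidemB (ih)
      have h3 := h1.trans h2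
      simpa [List.length_cons, List.replicate_succ] using h3

/-- key capture lemma: if every pair of B-elements shares a row, every finite list does -/
private lemma stmt10_capture
    (hidemB : ∀ x : B, x * x = x)
    (hcommB : ∀ x y : B, x * y = y * x)
    (hscB : ∀ a b : B, Relation.ReflTransGen (fun x y => x * y = y) a b)
    (R : Set (A × B))
    (hRclosed : ∀ p ∈ R, ∀ q ∈ R, p * q ∈ R)
    (hRsd2 : ∀ b : B, ∃ a : A, (a, b) ∈ R)
    (hlam : ∀ x y : B, ∃ a, (a, x) ∈ R ∧ (a, y) ∈ R) :
    ∀ l : List B, l ≠ [] → ∃ a, ∀ b ∈ l, (a, b) ∈ R := by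
  have main : ∀ k (l : List B), l.length ≤ k → l ≠ [] → ∃ a, ∀ b ∈ l, (a, b) ∈ R := by
    intro k
    induction k with
    | zero =>
        intro l hlen hne
        interval_cases h : l.length
        · exact absurd (List.length_eq_zero_iff.mp h) hne
    | succ k ih =>
        intro l hlen hne
        match l, hne with
        | [b], _ =>
            obtain ⟨a, ha⟩ := hRsd2 b
            exact ⟨a, by simpa using ha⟩
        | (u :: b₀ :: t), _ =>
            -- t' is the tail, of length ≤ k
            set t' : List B := b₀ :: t with ht'
            have hlt' : t'.length ≤ k := by
              simp only [ht', List.length_cons] at hlen ⊢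
              omega
            -- W s : every u' shares a row with all of s
            let W : List B → Prop := fun s => ∀ u', ∃ a, (a, u') ∈ R ∧ ∀ c ∈ s, (a, c) ∈ R
            have hstep : ∀ s s', W s → s'.length ≤ k → s' ≠ [] →
                List.Forall₂ (fun x y => x * y = y) s s' → W s' := by
              intro s s' hW hlen' hne' hle u'
              have habs := stmt10_absorb hscB
                {p | ∃ a, (a, p) ∈ R ∧ ∀ c ∈ s', (a, c) ∈ R} ?_ ?_ u'
              · exact habs
              · obtain ⟨a, ha⟩ := ih s' hlen' hne'
                match s', hne' with
                | (c₀ :: rest), _ =>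
                    exact ⟨c₀, a, ha c₀ (by simp), ha⟩
              · rintro p ⟨a', h1', h2'⟩ c
                obtain ⟨a, h1, h2⟩ := hW c
                refine ⟨a * a', ?_, ?_⟩
                · have := hRclosed (a, c) h1 (a', p) h1'
                  have h3 : (a * a', c * p) ∈ R := this
                  rwa [hcommB c p] at h3
                · exact stmt10_pointwise R hRclosed hle h2 h2'
            -- walk from the constant list to t'
            have hall : ∀ s', Relation.ReflTransGen (List.Forall₂ (fun x y : B => x * y = y))
                (List.replicate t'.length b₀) s' → W s' ∧ s'.length = t'.length := by
              intro s' h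
              induction h with
              | refl =>
                  constructor
                  · intro u'
                    obtain ⟨a, ha1, ha2⟩ := hlam u' b₀
                    refine ⟨a, ha1, ?_⟩
                    intro c hc
                    rw [List.eq_of_mem_replicate hc]
                    exact ha2
                  · simp
              | tail hw he ihW =>
                  rename_i mid fin
                  have hlenmid : mid.length = t'.length := ihW.2
                  have hlenfin : fin.length = t'.length := by
                    rw [← he.length_eq, hlenmid]
                  refine ⟨?_, hlenfin⟩
                  refine hstep mid fin ihW.1 (by rw [hlenfin]; exact hlt') ?_ he
                  · intro hnil
                    rw [hnil] at hlenfin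
                    simp [ht'] at hlenfin
            have hWt' : W t' :=
              (hall t' (stmt10_walk_replicate hidemB hscB t' b₀)).1
            obtain ⟨a, h1, h2⟩ := hWt' u
            refine ⟨a, ?_⟩
            intro bb hbb
            rcases List.mem_cons.mp hbb with rfl | hbb'
            · exact h1
            · exact h2 bb hbb'
  intro l hne
  exact main l.length l le_rfl hne

/-- iterated squaring of a relation -/
private def stmt10Iter {B : Type*} (lam : B → B → Prop) : ℕ → B → B → Prop
  | 0 => lam
  | (k + 1) => fun x z => ∃ y, stmt10Iter lam k x y ∧ stmt10Iter lam k y z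

section Iter

variable {lam : B → B → Prop}

private lemma stmt10Iter_refl (hrefl : ∀ x, lam x x) : ∀ k x, stmt10Iter lam k x x := by
  intro k
  induction k with
  | zero => exact hrefl
  | succ k ih => exact fun x => ⟨x, ih x, ih x⟩

private lemma stmt10Iter_symm (hsymm : ∀ {x y}, lam x y → lam y x) :
    ∀ k {x y}, stmt10Iter lam k x y → stmt10Iter lam k y x := by
  intro k
  induction k with
  | zero => exact fun h => hsymm h
  | succ k ih =>
      rintro x y ⟨m, h1, h2⟩
      exact ⟨m, ih h2, ih h1⟩

private lemma stmt10Iter_comp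
    (hcomp : ∀ a b c d, lam a b → lam c d → lam (a * c) (b * d)) :
    ∀ k a b c d, stmt10Iter lam k a b → stmt10Iter lam k c d →
      stmt10Iter lam k (a * c) (b * d) := by
  intro k
  induction k with
  | zero => exact hcomp
  | succ k ih =>
      rintro a b c d ⟨m, h1, h2⟩ ⟨m', h1', h2'⟩
      exact ⟨m * m', ih _ _ _ _ h1 h1', ih _ _ _ _ h2 h2'⟩

private lemma stmt10Iter_mono (hrefl : ∀ x, lam x x) :
    ∀ k {x y}, stmt10Iter lam k x y → stmt10Iter lam (k + 1) x y := by
  intro k x y h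
  exact ⟨y, h, stmt10Iter_refl hrefl k y⟩

private lemma stmt10Iter_mono_le (hrefl : ∀ x, lam x x) :
    ∀ {k K}, k ≤ K → ∀ {x y}, stmt10Iter lam k x y → stmt10Iter lam K x y := by
  intro k K hle
  induction hle with
  | refl => exact fun h => h
  | step h ih => exact fun h' => stmt10Iter_mono hrefl _ (ih h')

end Iter

/-- upgrade: a reflexive symmetric compatible relation whose square is full is full -/
private lemma stmt10_upgrade [Finite B]
    (hidemB : ∀ x : B, x * x = x)
    (hcommB : ∀ x y : B, x * y = y * x)
    (hscB : ∀ a b : B, Relation.ReflTransGen (fun x y => x * y = y) a b)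
    (V : B → B → Prop)
    (hrefl : ∀ x, V x x)
    (hsymm : ∀ {x y}, V x y → V y x)
    (hcomp : ∀ a b c d, V a b → V c d → V (a * c) (b * d))
    (hfull2 : ∀ x z, ∃ y, V x y ∧ V y z) :
    ∀ x y, V x y := by
  intro x y
  classical
  haveI : Fintype B := Fintype.ofFinite B
  set RV : Set (B × B) := {p | V p.1 p.2} with hRV
  have hclosed : ∀ p ∈ RV, ∀ q ∈ RV, p * q ∈ RV := by
    rintro ⟨p1, p2⟩ hp ⟨q1, q2⟩ hq
    exact hcomp _ _ _ _ hp hq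
  have hRsd2 : ∀ b : B, ∃ a : B, (a, b) ∈ RV := fun b => ⟨b, hrefl b⟩
  have hlam : ∀ p q : B, ∃ m, (m, p) ∈ RV ∧ (m, q) ∈ RV := by
    intro p q
    obtain ⟨m, h1, h2⟩ := hfull2 p q
    exact ⟨m, hsymm h1, h2⟩
  obtain ⟨x₀, hx₀⟩ := stmt10_capture hidemB hcommB hscB RV hclosed hRsd2 hlam
    (y :: Finset.univ.toList) (by simp)
  have hrow : ∀ b, (x₀, b) ∈ RV := by
    intro b
    exact hx₀ b (by simp)
  have := stmt10_fullrow hcommB hscB hscB RV hclosed (fun a => ⟨a, hrefl a⟩) x₀ hrow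
  exact this x y

end Stmt10Aux

theorem stmt10 {A B : Type*} [Mul A] [Mul B] [Finite A] [Finite B]
    (hidemA : ∀ x : A, x * x = x) (hcommA : ∀ x y : A, x * y = y * x)
    (habsA : ∀ x y : A, x * (x * y) = x * y)
    (hidemB : ∀ x : B, x * x = x) (hcommB : ∀ x y : B, x * y = y * x)
    (habsB : ∀ x y : B, x * (x * y) = x * y)
    (hscA : ∀ a b : A, Relation.ReflTransGen (fun x y => x * y = y) a b)
    (hscB : ∀ a b : B, Relation.ReflTransGen (fun x y => x * y = y) a b)
    (hsimpleB : MagmaSimple B)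
    (R : Set (A × B))
    (hRclosed : ∀ p ∈ R, ∀ q ∈ R, p * q ∈ R)
    (hRsd1 : ∀ a : A, ∃ b : B, (a, b) ∈ R)
    (hRsd2 : ∀ b : B, ∃ a : A, (a, b) ∈ R) :
    R = Set.univ ∨
      ∃ φ : A → B, Function.Surjective φ ∧
        (∀ a a' : A, φ (a * a') = φ a * φ a') ∧
        R = {p : A × B | p.2 = φ p.1} := by
  classical
  by_cases htriv : ∀ x y : B, x = y
  · left
    apply Set.eq_univ_iff_forall.mpr
    rintro ⟨a, b⟩
    obtain ⟨b', hb'⟩ := hRsd1 a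
    rwa [htriv b' b] at hb'
  · -- the linking relation
    set lam : B → B → Prop := fun x y => ∃ a, (a, x) ∈ R ∧ (a, y) ∈ R with hlamdef
    have lamrefl : ∀ b, lam b b := by
      intro b
      obtain ⟨a, ha⟩ := hRsd2 b
      exact ⟨a, ha, ha⟩
    have lamsymm : ∀ {x y}, lam x y → lam y x := by
      rintro x y ⟨a, h1, h2⟩
      exact ⟨a, h2, h1⟩
    have lamcomp : ∀ a b c d : B, lam a b → lam c d → lam (a * c) (b * d) := by
      rintro a b c d ⟨w, h1, h2⟩ ⟨w', h1', h2'⟩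
      exact ⟨w * w', hRclosed _ h1 _ h1', hRclosed _ h2 _ h2'⟩
    -- the linking congruence
    set Θ : B → B → Prop := Relation.ReflTransGen lam with hΘdef
    have Θsymm : ∀ {x y}, Θ x y → Θ y x := by
      intro x y h
      induction h with
      | refl => exact Relation.ReflTransGen.refl
      | tail hw he ih =>
          exact Relation.ReflTransGen.head (lamsymm he) ih
    have ΘEquiv : Equivalence Θ :=
      ⟨fun _ => Relation.ReflTransGen.refl, Θsymm, Relation.ReflTransGen.trans⟩
    have Θmulright : ∀ (c : B) {x y}, Θ x y → Θ (x * c) (y * c) := by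
      intro c x y h
      induction h with
      | refl => exact Relation.ReflTransGen.refl
      | tail hw he ih =>
          exact ih.tail (lamcomp _ _ _ _ he (lamrefl c))
    have Θmulleft : ∀ (c : B) {x y}, Θ x y → Θ (c * x) (c * y) := by
      intro c x y h
      induction h with
      | refl => exact Relation.ReflTransGen.refl
      | tail hw he ih =>
          exact ih.tail (lamcomp _ _ _ _ (lamrefl c) he)
    have ΘComp : ∀ a b c d : B, Θ a b → Θ c d → Θ (a * c) (b * d) := by
      intro a b c d h1 h2
      exact (Θmulright c h1).trans (Θmulleft b h2)
    rcases hsimpleB Θ ΘEquiv ΘComp with hdiag | hfull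
    · -- graph case
      right
      have huniq : ∀ (a : A) (b b' : B), (a, b) ∈ R → (a, b') ∈ R → b = b' := by
        intro a b b' h h'
        exact (hdiag b b').mp (Relation.ReflTransGen.single ⟨a, h, h'⟩)
      refine ⟨fun a => Classical.choose (hRsd1 a), ?_, ?_, ?_⟩
      · intro b
        obtain ⟨a, ha⟩ := hRsd2 b
        exact ⟨a, huniq a _ b (Classical.choose_spec (hRsd1 a)) ha⟩
      · intro a a'
        have h1 := Classical.choose_spec (hRsd1 a)
        have h2 := Classical.choose_spec (hRsd1 a')
        have h3 := hRclosed _ h1 _ h2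
        exact huniq (a * a') _ _ (Classical.choose_spec (hRsd1 (a * a'))) h3
      · ext ⟨a, b⟩
        constructor
        · intro h
          exact huniq a b _ h (Classical.choose_spec (hRsd1 a))
        · intro h
          have : b = Classical.choose (hRsd1 a) := h
          rw [this]
          exact Classical.choose_spec (hRsd1 a)
    · -- full case
      left
      push_neg at htriv
      obtain ⟨x₀, y₀, hx₀y₀⟩ := htriv
      haveI : Fintype B := Fintype.ofFinite B
      -- lam is full
      have hexk : ∀ x y : B, ∃ k, stmt10Iter lam k x y := by
        intro x y
        have h := hfull x y
        induction h with
        | refl => exact ⟨0, lamrefl x⟩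
        | tail hw he ih =>
            rename_i mid fin
            obtain ⟨k, hk⟩ := ih
            exact ⟨k + 1, mid, hk, stmt10Iter_mono_le lamrefl (Nat.zero_le k) he⟩
      choose g hg using hexk
      set K := (Finset.univ (α := B × B)).sup (fun p => g p.1 p.2) with hK
      have hKfull : ∀ x y, stmt10Iter lam K x y := by
        intro x y
        exact stmt10Iter_mono_le lamrefl
          (Finset.le_sup (f := fun p : B × B => g p.1 p.2) (Finset.mem_univ (x, y))) (hg x y)
      have down : ∀ k, (∀ x y, stmt10Iter lam k x y) → ∀ x y, lam x y := by
        intro k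
        induction k with
        | zero => exact fun h => h
        | succ k ih =>
            intro h
            apply ih
            exact stmt10_upgrade hidemB hcommB hscB (stmt10Iter lam k)
              (stmt10Iter_refl lamrefl k)
              (fun {x y} hxy => stmt10Iter_symm (fun {x y} => lamsymm) k hxy)
              (stmt10Iter_comp lamcomp k)
              (fun x z => h x z)
      have hlamfull : ∀ x y, lam x y := down K hKfull
      -- capture the full list, get a full row
      obtain ⟨a₀, ha₀⟩ := stmt10_capture hidemB hcommB hscB R hRclosed hRsd2
        (fun x y => hlamfull x y) (x₀ :: Finset.univ.toList) (by simp)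
      have hrow : ∀ b, (a₀, b) ∈ R := fun b => ha₀ b (by simp)
      apply Set.eq_univ_iff_forall.mpr
      rintro ⟨a, b⟩
      exact stmt10_fullrow hcommB hscA hscB R hRclosed hRsd1 a₀ hrow a b
end

section
/- Let D be a finite type with a binary operation · satisfying the identity x·(y·z) = x·(z·y), and let θ be a congruence on (D,·) that is projection-on-classes (a·b = a whenever θ a b). Let X be a finite set, and for each x ∈ X let P_x ⊆ D be closed under ·, and for each (x,y) ∈ X² let R_{xy} ⊆ P_x × P_y be closed under coordinatewise ·. Suppose s : X → D is a solution (s(x) ∈ P_x for all x and (s(x),s(y)) ∈ R_{xy} for all x,y), and ψ : X → D satisfies: (a) θ (s(x)·ψ(x)) (ψ(x)) for every x (the θ-class of s(x) points to the θ-class of ψ(x)); and (b) for all x, y there exists (a,b) ∈ R_{xy} with θ a (ψ(x)) and θ b (ψ(y)) (ψ induces a solution of the quotient instance). Then t : X → D defined by t(x) = s(x)·ψ(x) is a solution, and θ (t(x)) (ψ(x)) for every x, i.e. t passes through the quotient solution induced by ψ. -/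
theorem stmt15 {D : Type*} [Mul D] [Finite D]
    (hswap : ∀ x y z : D, x * (y * z) = x * (z * y))
    (θ : D → D → Prop) (hθequiv : Equivalence θ)
    (hθcompat : ∀ a b c d : D, θ a b → θ c d → θ (a * c) (b * d))
    (hproj : ∀ a b : D, θ a b → a * b = a)
    {X : Type*} [Finite X]
    (P : X → Set D) (R : X → X → Set (D × D))
    (hPclosed : ∀ x, ∀ a ∈ P x, ∀ b ∈ P x, a * b ∈ P x)
    (hRsub : ∀ x y, R x y ⊆ (P x) ×ˢ (P y))
    (hRclosed : ∀ x y, ∀ p ∈ R x y, ∀ q ∈ R x y, p * q ∈ R x y)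
    (s ψ : X → D)
    (hs1 : ∀ x, s x ∈ P x)
    (hs2 : ∀ x y, (s x, s y) ∈ R x y)
    (ha : ∀ x, θ (s x * ψ x) (ψ x))
    (hb : ∀ x y, ∃ p ∈ R x y, θ p.1 (ψ x) ∧ θ p.2 (ψ y)) :
    let t : X → D := fun x => s x * ψ x
    (∀ x, t x ∈ P x) ∧ (∀ x y, (t x, t y) ∈ R x y) ∧ ∀ x, θ (t x) (ψ x) := by
  intro t
  have key : ∀ u v w : D, θ v w → u * v = u * w := by
    intro u v w h
    calc u * v = u * (v * w) := by rw [hproj v w h]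
    _ = u * (w * v) := hswap u v w
    _ = u * w := by rw [hproj w v (hθequiv.symm h)]
  refine ⟨fun x => ?_, fun x y => ?_, fun x => ha x⟩
  · obtain ⟨p, hp, h1, _⟩ := hb x x
    have : t x = s x * p.1 := key (s x) (ψ x) p.1 (hθequiv.symm h1)
    rw [this]
    exact hPclosed x _ (hs1 x) _ (hRsub x x hp).1
  · obtain ⟨p, hp, h1, h2⟩ := hb x y
    have e1 : t x = s x * p.1 := key (s x) (ψ x) p.1 (hθequiv.symm h1)
    have e2 : t y = s y * p.2 := key (s y) (ψ y) p.2 (hθequiv.symm h2)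
    have : (t x, t y) = (s x, s y) * p := by
      simp [e1, e2, Prod.mul_def]
    rw [this]
    exact hRclosed x y _ (hs2 x y) _ hp
end
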